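/- Analytic persistence of a simple eigenvalue (existence of the unbranched eigenvalue map near the origin): let H0 and V be N×N complex matrices and suppose E0 ∈ ℂ is a simple eigenvalue of H0 (i.e., a root of multiplicity one of the characteristic polynomial of H0). Then there exist r > 0 and a function f : ℂ → ℂ that is analytic on the open ball of radius r centered at 0, such that f(0) = E0 and, for every λ with |λ| < r, f(λ) is a simple eigenvalue of H0 + λ·V. -/

import Mathlib

open Matrix

section Aux

variable {N : ℕ} (H0 V : Matrix (Fin N) (Fin N) ℂ)

/-- The two-variable characteristic function. -/
noncomputable def auxF (H0 V : Matrix (Fin N) (Fin N) ℂ) : ℂ × ℂ → ℂ :=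
  fun p => (p.2 • (1 : Matrix (Fin N) (Fin N) ℂ) - (H0 + p.1 • V)).det

lemma auxF_eval (lam z : ℂ) :
    auxF H0 V (lam, z) = ((H0 + lam • V).charpoly).eval z := by
  have h : ((H0 + lam • V).charpoly).eval z
      = ((charmatrix (H0 + lam • V)).map (Polynomial.evalRingHom z)).det := by
    rw [Matrix.charpoly]
    exact RingHom.map_det (Polynomial.evalRingHom z) (charmatrix (H0 + lam • V))
  rw [h, auxF]
  congr 1
  ext i j
  by_cases hij : i = j <;>
    simp [charmatrix_apply, hij, Matrix.one_apply, Matrix.sub_apply, Matrix.smul_apply,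
      Matrix.add_apply, Matrix.diagonal_apply, Matrix.map_apply, smul_eq_mul]

lemma auxF_analytic (p : ℂ × ℂ) : AnalyticAt ℂ (auxF H0 V) p := by
  have hrw : auxF H0 V = fun q : ℂ × ℂ =>
      ∑ σ : Equiv.Perm (Fin N), ((Equiv.Perm.sign σ : ℤ) : ℂ) *
        ∏ i, (q.2 • (1 : Matrix (Fin N) (Fin N) ℂ) - (H0 + q.1 • V)) (σ i) i := by
    funext q
    exact Matrix.det_apply' _
  rw [hrw]
  apply Finset.analyticAt_fun_sum
  intro σ _
  apply AnalyticAt.mul analyticAt_const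
  apply Finset.analyticAt_fun_prod
  intro i _
  have : (fun q : ℂ × ℂ => (q.2 • (1 : Matrix (Fin N) (Fin N) ℂ) - (H0 + q.1 • V)) (σ i) i)
      = fun q : ℂ × ℂ => q.2 * (1 : Matrix (Fin N) (Fin N) ℂ) (σ i) i
          - (H0 (σ i) i + q.1 * V (σ i) i) := by
    funext q
    simp [Matrix.sub_apply, Matrix.smul_apply, Matrix.add_apply, smul_eq_mul]
  rw [this]
  exact (analyticAt_snd.mul analyticAt_const).sub
    (analyticAt_const.add (analyticAt_fst.mul analyticAt_const))

lemma auxF_partial (lam z : ℂ) :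
    fderiv ℂ (auxF H0 V) (lam, z) ((0 : ℂ), (1 : ℂ))
      = ((H0 + lam • V).charpoly.derivative).eval z := by
  have h1 : HasDerivAt (fun w => auxF H0 V (lam, w))
      (fderiv ℂ (auxF H0 V) (lam, z) ((0 : ℂ), (1 : ℂ))) z := by
    have hincl : HasDerivAt (fun w : ℂ => ((lam, w) : ℂ × ℂ)) ((0 : ℂ), (1 : ℂ)) z :=
      (hasDerivAt_const z lam).prodMk (hasDerivAt_id z)
    exact ((auxF_analytic H0 V (lam, z)).differentiableAt.hasFDerivAt).comp_hasDerivAt z hincl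
  have h2 : HasDerivAt (fun w => auxF H0 V (lam, w))
      (((H0 + lam • V).charpoly.derivative).eval z) z := by
    have hfun : (fun w => auxF H0 V (lam, w))
        = fun w => ((H0 + lam • V).charpoly).eval w := funext fun w => auxF_eval H0 V lam w
    rw [hfun]
    exact Polynomial.hasDerivAt _ z
  exact h1.unique h2

end Aux

/-- Analytic persistence of a simple eigenvalue: if `E0` is a simple eigenvalue of `H0`
(a root of multiplicity one of its characteristic polynomial), then there are `r > 0` and
`f` analytic on the ball of radius `r` about `0` with `f 0 = E0` such that `f λ` is a
simple eigenvalue of `H0 + λ·V` for all `|λ| < r`. -/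
theorem stmt_16 {N : ℕ} (hN : 0 < N) (H0 V : Matrix (Fin N) (Fin N) ℂ)
    (E0 : ℂ) (hE0 : H0.charpoly.rootMultiplicity E0 = 1) :
    ∃ r : ℝ, 0 < r ∧ ∃ f : ℂ → ℂ, AnalyticOnNhd ℂ f (Metric.ball 0 r) ∧ f 0 = E0 ∧
      ∀ lam : ℂ, ‖lam‖ < r → (H0 + lam • V).charpoly.rootMultiplicity (f lam) = 1 := by
  classical
  set F := auxF H0 V with hFdef
  have hmono : ∀ lam : ℂ, ((H0 + lam • V).charpoly) ≠ 0 :=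
    fun lam => (Matrix.charpoly_monic _).ne_zero
  -- multiplicity criterion
  have hmult : ∀ lam z : ℂ, ((H0 + lam • V).charpoly).eval z = 0 →
      ((H0 + lam • V).charpoly.derivative).eval z ≠ 0 →
      ((H0 + lam • V).charpoly).rootMultiplicity z = 1 := by
    intro lam z h1 h2
    have hne := hmono lam
    have hpos : 0 < Polynomial.rootMultiplicity z ((H0 + lam • V).charpoly) :=
      (Polynomial.rootMultiplicity_pos hne).2 h1
    have hnlt : ¬ 1 < Polynomial.rootMultiplicity z ((H0 + lam • V).charpoly) := by
      rw [Polynomial.one_lt_rootMultiplicity_iff_isRoot hne]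
      rintro ⟨-, h⟩
      exact h2 h
    omega
  -- facts about E0
  have hH0 : H0 + (0 : ℂ) • V = H0 := by simp
  have hcp0 : H0.charpoly ≠ 0 := (Matrix.charpoly_monic _).ne_zero
  have hroot0 : H0.charpoly.eval E0 = 0 := by
    have := (Polynomial.rootMultiplicity_pos hcp0).1 (by rw [hE0]; norm_num)
    exact this
  have hd0 : (H0.charpoly.derivative).eval E0 ≠ 0 := by
    intro h
    have : 1 < H0.charpoly.rootMultiplicity E0 := by
      rw [Polynomial.one_lt_rootMultiplicity_iff_isRoot hcp0]
      exact ⟨hroot0, h⟩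
    omega
  -- the map Φ
  set Φ : ℂ × ℂ → ℂ × ℂ := fun p => (p.1, F p) with hΦdef
  have hΦa : ∀ p, AnalyticAt ℂ Φ p := fun p => analyticAt_fst.prod (auxF_analytic H0 V p)
  set a0 : ℂ × ℂ := ((0 : ℂ), E0) with ha0def
  have hF0 : F a0 = 0 := by
    rw [hFdef, ha0def, auxF_eval, hH0, hroot0]
  have hda0 : fderiv ℂ F a0 ((0 : ℂ), (1 : ℂ)) = (H0.charpoly.derivative).eval E0 := by
    rw [hFdef, ha0def]
    rw [auxF_partial, hH0]
  set L : (ℂ × ℂ) →L[ℂ] (ℂ × ℂ) :=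
    (ContinuousLinearMap.fst ℂ ℂ ℂ).prod (fderiv ℂ F a0) with hLdef
  have hL : HasFDerivAt Φ L a0 :=
    (hasFDerivAt_fst).prodMk ((auxF_analytic H0 V a0).differentiableAt.hasFDerivAt)
  have hLinj : Function.Injective L := by
    have key : ∀ v : ℂ × ℂ, L v = 0 → v = 0 := by
      intro v hv
      have h1 : v.1 = 0 := congrArg Prod.fst hv
      have h2 : fderiv ℂ F a0 v = 0 := congrArg Prod.snd hv
      have hvrw : v = v.2 • ((0 : ℂ), (1 : ℂ)) := Prod.ext (by simp [h1]) (by simp)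
      rw [hvrw, ContinuousLinearMap.map_smul, hda0] at h2
      have : v.2 = 0 := by
        have hd := hd0
        simpa [smul_eq_mul, hd] using h2
      rw [hvrw, this, zero_smul]
    intro a b hab
    have := key (a - b) (by rw [map_sub, hab, sub_self])
    exact sub_eq_zero.mp this
  set e : (ℂ × ℂ) ≃L[ℂ] (ℂ × ℂ) :=
    (LinearEquiv.ofInjectiveEndo (L : (ℂ × ℂ) →ₗ[ℂ] (ℂ × ℂ)) hLinj).toContinuousLinearEquiv
    with hedef
  have hcoe : (e : (ℂ × ℂ) →L[ℂ] (ℂ × ℂ)) = L := by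
    ext v <;> simp [hedef, LinearEquiv.coe_ofInjectiveEndo]
  have hstrict : HasStrictFDerivAt Φ (e : (ℂ × ℂ) →L[ℂ] (ℂ × ℂ)) a0 := by
    have h1 := (hΦa a0).hasStrictFDerivAt
    rwa [hL.fderiv, ← hcoe] at h1
  set Φh := hstrict.toOpenPartialHomeomorph Φ with hΦhdef
  have hcoeΦ : ⇑Φh = Φ := hstrict.toOpenPartialHomeomorph_coe
  have hsource : a0 ∈ Φh.source := hstrict.mem_toOpenPartialHomeomorph_source
  have hΦa0 : Φ a0 = ((0 : ℂ), (0 : ℂ)) := by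
    rw [hΦdef]
    show (a0.1, F a0) = _
    rw [hF0]
  have hΦha0 : Φh a0 = ((0 : ℂ), (0 : ℂ)) := by rw [hcoeΦ, hΦa0]
  have htarget : ((0 : ℂ), (0 : ℂ)) ∈ Φh.target := by
    rw [← hΦha0]
    exact Φh.map_source hsource
  have hsymm0 : Φh.symm ((0 : ℂ), (0 : ℂ)) = a0 := by
    rw [← hΦha0, Φh.left_inv hsource]
  have hsymm_an : AnalyticAt ℂ Φh.symm ((0 : ℂ), (0 : ℂ)) := by
    have := Φh.analyticAt_symm' (i := e) hsource
      (by rw [hcoeΦ]; exact hΦa a0) (by rw [hcoeΦ, hL.fderiv, ← hcoe])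
    rwa [hΦha0] at this
  -- continuity of the second partial derivative
  have hGcont : Continuous fun p : ℂ × ℂ => fderiv ℂ F p ((0 : ℂ), (1 : ℂ)) := by
    have hOn : AnalyticOnNhd ℂ F Set.univ := fun p _ => auxF_analytic H0 V p
    have hfd : Continuous (fderiv ℂ F) := by
      have := hOn.fderiv
      exact continuous_iff_continuousAt.2 fun p => (this p (Set.mem_univ p)).continuousAt
    exact hfd.clm_apply continuous_const
  -- the inclusion map
  have hι : ContinuousAt (fun lam : ℂ => ((lam, (0 : ℂ)) : ℂ × ℂ)) 0 :=
    (continuous_id.prodMk continuous_const).continuousAt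
  have hι0 : (fun lam : ℂ => ((lam, (0 : ℂ)) : ℂ × ℂ)) 0 = ((0 : ℂ), (0 : ℂ)) := rfl
  have hιt : Filter.Tendsto (fun lam : ℂ => ((lam, (0 : ℂ)) : ℂ × ℂ)) (nhds 0)
      (nhds ((0 : ℂ), (0 : ℂ))) := by
    rw [← hι0]
    exact hι.tendsto
  -- eventual conditions
  have c1 : ∀ᶠ lam : ℂ in nhds 0, AnalyticAt ℂ Φh.symm (lam, 0) :=
    hιt.eventually hsymm_an.eventually_analyticAt
  have c2 : ∀ᶠ lam : ℂ in nhds 0, ((lam, (0 : ℂ)) : ℂ × ℂ) ∈ Φh.target :=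
    hιt.eventually (Φh.open_target.mem_nhds htarget)
  have c3 : ∀ᶠ lam : ℂ in nhds 0,
      fderiv ℂ F (Φh.symm (lam, 0)) ((0 : ℂ), (1 : ℂ)) ≠ 0 := by
    have hsc : ContinuousAt Φh.symm ((0 : ℂ), (0 : ℂ)) :=
      Φh.continuousAt_symm htarget
    have hcomp : ContinuousAt
        (fun lam : ℂ => fderiv ℂ F (Φh.symm (lam, 0)) ((0 : ℂ), (1 : ℂ))) 0 := by
      apply ContinuousAt.comp (hGcont.continuousAt)
      exact ContinuousAt.comp (by rw [← hι0] at hsc ⊢; exact hsc) hι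
    apply hcomp.eventually_ne
    show fderiv ℂ F (Φh.symm ((0 : ℂ), (0 : ℂ))) ((0 : ℂ), (1 : ℂ)) ≠ 0
    rw [hsymm0, hda0]
    exact hd0
  have hall := (c1.and (c2.and c3))
  rw [Metric.eventually_nhds_iff_ball] at hall
  obtain ⟨r, hr, hball⟩ := hall
  refine ⟨r, hr, fun lam => (Φh.symm (lam, 0)).2, ?_, ?_, ?_⟩
  · intro lam hmem
    obtain ⟨hc1, -, -⟩ := hball lam hmem
    have h2 : AnalyticAt ℂ (Prod.snd : ℂ × ℂ → ℂ) (Φh.symm (lam, 0)) := analyticAt_snd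
    have h3 : AnalyticAt ℂ (fun l : ℂ => ((l, (0 : ℂ)) : ℂ × ℂ)) lam :=
      analyticAt_id.prod analyticAt_const
    have hgc : AnalyticAt ℂ (fun p : ℂ × ℂ => (Φh.symm p).2) (lam, 0) := h2.comp hc1
    have hfin : AnalyticAt ℂ
        ((fun p : ℂ × ℂ => (Φh.symm p).2) ∘ fun l : ℂ => ((l, (0 : ℂ)) : ℂ × ℂ)) lam :=
      AnalyticAt.comp hgc h3
    exact hfin
  · have : (Φh.symm (((0 : ℂ), (0 : ℂ)) : ℂ × ℂ)).2 = E0 := by rw [hsymm0]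
    exact this
  · intro lam hlam
    have hmem : lam ∈ Metric.ball (0 : ℂ) r := by
      rw [Metric.mem_ball, dist_zero_right]
      exact hlam
    obtain ⟨-, hc2, hc3⟩ := hball lam hmem
    set q := Φh.symm (lam, 0) with hqdef
    have hq : Φ q = (lam, 0) := by
      rw [← hcoeΦ]
      exact Φh.right_inv hc2
    have hq1 : q.1 = lam := congrArg Prod.fst hq
    have hq2 : F q = 0 := congrArg Prod.snd hq
    have hqeq : q = (lam, q.2) := by
      rw [← hq1]
    rw [hqeq] at hq2
    rw [hFdef, auxF_eval] at hq2
    have hder : ((H0 + lam • V).charpoly.derivative).eval q.2 ≠ 0 := by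
      rw [← auxF_partial H0 V lam q.2, ← hFdef]
      rw [hqeq] at hc3
      exact hc3
    exact hmult lam q.2 hq2 hder
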